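/- Let κ be an infinite cardinal and let T be a well-pruned tree of height κ⁺ such that every level of T has cardinality strictly less than κ. Then T has a cofinal branch, i.e., there is a chain B ⊆ T containing an element of every level α < κ⁺. -/

import Mathlib

open Cardinal

/-- `ht` is the height function of the tree `(T, <)`: for every `x : T`, the map `ht`
restricted to the set `{y | y < x}` of predecessors of `x` is an order isomorphism onto
the ordinals below `ht x`; equivalently, the predecessors of each node are linearly
ordered and well-ordered by `<` with order type `ht x`. -/
structure IsHeightFunction (T : Type*) [PartialOrder T] (ht : T → Ordinal) : Prop where
  /-- `ht` is strictly increasing on chains of the tree. -/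
  lt_of_lt : ∀ {y x : T}, y < x → ht y < ht x
  /-- among predecessors of a fixed node, smaller height means smaller node
  (so predecessors are linearly ordered and `ht` reflects the order). -/
  lt_of_ht_lt : ∀ {x y z : T}, y < x → z < x → ht y < ht z → y < z
  /-- every ordinal below `ht x` is the height of some predecessor of `x`. -/
  surj_on : ∀ x : T, ∀ β < ht x, ∃ y : T, y < x ∧ ht y = β

universe u



namespace CofBranchAux

/-- Generic transfinite iteration of a "next"-function `F`. -/
noncomputable def iter (F : Ordinal.{u} → Ordinal.{u}) : Ordinal.{u} → Ordinal.{u} :=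
  WellFounded.fix Ordinal.lt_wf (fun i ih => F (Ordinal.bsup i fun j hj => ih j hj + 1))

theorem iter_eq (F : Ordinal.{u} → Ordinal.{u}) (i : Ordinal.{u}) :
    iter F i = F (Ordinal.bsup i fun j _ => iter F j + 1) := by
  rw [iter, WellFounded.fix_eq]

theorem iter_spec {F : Ordinal.{u} → Ordinal.{u}} {c : Ordinal.{u}} (hlim : Order.IsSuccLimit c)
    (hc : ∀ i < c, Ordinal.card i < c.cof)
    (hF : ∀ x < c, x < F x ∧ F x < c) :
    ∀ i < c, iter F i < c ∧ i ≤ iter F i ∧ (∀ j < i, iter F j < iter F i) ∧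
      ∃ x, x < c ∧ iter F i = F x := by
  intro i
  induction i using Ordinal.induction with
  | h i IH =>
    intro hi
    have hsucc : ∀ a < c, a + 1 < c := fun a ha => by
      rw [Ordinal.add_one_eq_succ]; exact hlim.succ_lt ha
    have hb : Ordinal.bsup i (fun j _ => iter F j + 1) < c := by
      refine Ordinal.bsup_lt_ord (hc i hi) (fun j hj => ?_)
      exact hsucc _ (IH j hj (hj.trans hi)).1
    set b := Ordinal.bsup i (fun j _ => iter F j + 1) with hbdef
    have heq : iter F i = F b := iter_eq F i
    have hFb := hF b hb
    have hib : i ≤ b := by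
      by_contra hcon
      push_neg at hcon
      have hle : iter F b + 1 ≤ b := Ordinal.le_bsup _ b hcon
      have h2 : b ≤ iter F b := (IH b hcon hb).2.1
      exact lt_irrefl b (lt_of_lt_of_le (lt_of_le_of_lt h2 (lt_add_one _)) hle)
    refine ⟨heq ▸ hFb.2, ?_, ?_, b, hb, heq⟩
    · exact le_of_lt (lt_of_le_of_lt hib (heq ▸ hFb.1))
    · intro j hj
      have : iter F j + 1 ≤ b := Ordinal.le_bsup _ j hj
      calc iter F j < iter F j + 1 := lt_add_one _
        _ ≤ b := this
        _ < F b := hFb.1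
        _ = iter F i := heq.symm

/-- `δ` admits a strictly monotone cofinal family indexed by the ordinals below `νo`. -/
def Good (νo δ : Ordinal.{u}) : Prop :=
  ∃ F : Ordinal.{u} → Ordinal.{u},
    (∀ i j, i < j → j < νo → F i < F j) ∧ (∀ i < νo, F i < δ) ∧ ∀ β < δ, ∃ i < νo, β ≤ F i

theorem Good.sup_lt {ν : Cardinal.{u}} {δ : Ordinal.{u}} (hg : Good ν.ord δ)
    (hνreg : ν.IsRegular) {ι : Type u} (f : ι → Ordinal.{u}) (hι : #ι < ν)
    (hf : ∀ p, f p < δ) : ∃ γ < δ, ∀ p, f p < γ := by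
  classical
  obtain ⟨F, hFmono, hFlt, hFcof⟩ := hg
  have hνlim : Order.IsSuccLimit ν.ord := Cardinal.isSuccLimit_ord hνreg.aleph0_le
  set ip : ι → Ordinal.{u} := fun p => (hFcof (f p) (hf p)).choose + 1 with hipdef
  have hips : ∀ p, ip p < ν.ord ∧ f p ≤ F ((hFcof (f p) (hf p)).choose) := by
    intro p
    obtain ⟨h1, h2⟩ := (hFcof (f p) (hf p)).choose_spec
    refine ⟨?_, h2⟩
    have hip : ip p = (hFcof (f p) (hf p)).choose + 1 := rfl
    rw [hip, Ordinal.add_one_eq_succ]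
    exact hνlim.succ_lt h1
  have hsup : iSup ip < ν.ord := by
    refine Ordinal.iSup_lt_ord ?_ (fun p => (hips p).1)
    rw [hνreg.cof_eq]; exact hι
  refine ⟨F (iSup ip), hFlt _ hsup, fun p => ?_⟩
  have h1 : (hFcof (f p) (hf p)).choose < iSup ip := by
    calc (hFcof (f p) (hf p)).choose < ip p := lt_add_one _
      _ ≤ iSup ip := Ordinal.le_iSup _ _
  exact lt_of_le_of_lt (hips p).2 (hFmono _ _ h1 hsup)

variable {T : Type u} [PartialOrder T]

/-- shared predecessor at stratum `i` (level `e i`). -/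
def EA (ht : T → Ordinal.{u}) (e : Ordinal.{u} → Ordinal.{u}) (y y' : T) (i : Ordinal.{u}) :
    Prop :=
  ∃ z : T, z < y ∧ z < y' ∧ ht z = e i

def Unbdd (ht : T → Ordinal.{u}) (e : Ordinal.{u} → Ordinal.{u}) (δ : Ordinal.{u})
    (y y' : T) : Prop :=
  ∀ β < δ, ∃ i, β ≤ i ∧ i < δ ∧ EA ht e y y' i

def Pii (ht : T → Ordinal.{u}) (e : Ordinal.{u} → Ordinal.{u}) (δ γ : Ordinal.{u}) : Prop :=
  ∀ y y' : T, ht y = e δ → ht y' = e δ →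
    (∃ i, γ < i ∧ i < δ ∧ EA ht e y y' i) → Unbdd ht e δ y y'

theorem exists_pi {ht : T → Ordinal.{u}} {e : Ordinal.{u} → Ordinal.{u}}
    {ν : Cardinal.{u}} (hνreg : ν.IsRegular) {δ : Ordinal.{u}} (hg : Good ν.ord δ)
    (hpair : #{x : T // ht x = e δ} * #{x : T // ht x = e δ} < ν) :
    ∃ γ < δ, Pii ht e δ γ := by
  classical
  set L := {x : T // ht x = e δ} with hLdef
  set f : L × L → Ordinal.{u} := fun p =>
    if h : ∃ β < δ, ∀ i, β ≤ i → i < δ → ¬ EA ht e (p.1 : T) (p.2 : T) i then h.choose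
    else 0 with hfdef
  have hδ0 : 0 < δ := by
    obtain ⟨F, _, hFlt, _⟩ := hg
    have := hFlt 0 (Cardinal.isSuccLimit_ord hνreg.aleph0_le).pos
    exact lt_of_le_of_lt zero_le this
  have hflt : ∀ p, f p < δ := by
    intro p
    simp only [hfdef]
    split
    · next h => exact h.choose_spec.1
    · exact hδ0
  have hcard : #(L × L) < ν := by
    simpa [Cardinal.mk_prod] using hpair
  obtain ⟨γ, hγδ, hγ⟩ := hg.sup_lt hνreg f hcard hflt
  refine ⟨γ, hγδ, ?_⟩
  intro y y' hy hy' ⟨i, hγi, hiδ, hEA⟩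
  set p : L × L := (⟨y, hy⟩, ⟨y', hy'⟩) with hpdef
  by_cases h : ∃ β < δ, ∀ i, β ≤ i → i < δ → ¬ EA ht e y y' i
  · exfalso
    have hfp : f p = h.choose := by rw [hfdef]; exact dif_pos h
    have hble : h.choose ≤ i := by
      have := hγ p
      rw [hfp] at this
      exact le_of_lt (this.trans hγi)
    exact h.choose_spec.2 i hble hiδ hEA
  · push_neg at h
    intro β hβ
    exact h β hβ

theorem exists_unbounded_fiber {Λ : Ordinal.{u}} {A : Ordinal.{u} → Prop}
    (hA : ∀ β < Λ, ∃ δ, β < δ ∧ δ < Λ ∧ A δ) {ι : Type u} (f : Ordinal.{u} → ι)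
    (hι : #ι < Λ.cof) :
    ∃ z : ι, ∀ β < Λ, ∃ δ, β < δ ∧ δ < Λ ∧ A δ ∧ f δ = z := by
  classical
  by_contra hcon
  push_neg at hcon
  choose G hG1 hG2 using hcon
  have hsup : iSup G < Λ := Ordinal.iSup_lt_ord hι hG1
  obtain ⟨δ, hδ1, hδ2, hδ3⟩ := hA (iSup G) hsup
  exact hG2 (f δ) δ (lt_of_le_of_lt (Ordinal.le_iSup G (f δ)) hδ1) hδ2 hδ3 rfl

theorem exists_good_closed {Λ : Ordinal.{u}} (hΛlim : Order.IsSuccLimit Λ)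
    (hcardΛ : ∀ i < Λ, Ordinal.card i < Λ.cof) {ν : Cardinal.{u}}
    (hνordΛ : ν.ord < Λ) (hνΛcof : ν < Λ.cof) (hνlim : Order.IsSuccLimit ν.ord)
    (g : Ordinal.{u} → Ordinal.{u}) (hg : ∀ x < Λ, g x < Λ) :
    ∃ δ, δ < Λ ∧ Good ν.ord δ ∧ ∀ β < δ, g β < δ := by
  classical
  have hsucc : ∀ a < Λ, a + 1 < Λ := fun a ha => by
    rw [Ordinal.add_one_eq_succ]; exact hΛlim.succ_lt ha
  set g' : Ordinal.{u} → Ordinal.{u} :=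
    fun x => Ordinal.bsup (x + 1) (fun β _ => g β + 1) with hg'def
  have hg'lt : ∀ x < Λ, g' x < Λ := by
    intro x hx
    refine Ordinal.bsup_lt_ord (hcardΛ _ (hsucc x hx)) (fun β hβ => ?_)
    have hβΛ : β < Λ := lt_of_lt_of_le hβ (by
      rw [Ordinal.add_one_eq_succ, Order.succ_le_iff]; exact hx)
    exact hsucc _ (hg β hβΛ)
  have hg'mono : ∀ x x', x ≤ x' → g' x ≤ g' x' := by
    intro x x' hxx'
    refine Ordinal.bsup_le (fun β hβ => ?_)
    exact Ordinal.le_bsup _ β (lt_of_lt_of_le hβ (by simpa using hxx'))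
  have hg'ge : ∀ x, g x < g' x := by
    intro x
    have := Ordinal.le_bsup (fun β (_ : β < x + 1) => g β + 1) x (lt_add_one x)
    exact lt_of_lt_of_le (lt_add_one _) this
  set F₀ : Ordinal.{u} → Ordinal.{u} := fun x => (g' x ⊔ x) + 1 with hF₀def
  have hF₀ : ∀ x < Λ, x < F₀ x ∧ F₀ x < Λ := by
    intro x hx
    constructor
    · exact lt_of_le_of_lt le_sup_right (lt_add_one _)
    · exact hsucc _ (max_lt (hg'lt x hx) hx)
  have hF₀mono : ∀ x x', x ≤ x' → F₀ x ≤ F₀ x' := by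
    intro x x' h
    have : g' x ⊔ x ≤ g' x' ⊔ x' := sup_le_sup (hg'mono x x' h) h
    simpa [hF₀def] using add_le_add_right this 1
  have hP := iter_spec hΛlim hcardΛ hF₀
  set eg := iter F₀ with hegdef
  have hegΛ : ∀ i < Λ, eg i < Λ := fun i hi => (hP i hi).1
  set δ := Ordinal.bsup ν.ord (fun i _ => eg i + 1) with hδdef
  have hδΛ : δ < Λ := by
    refine Ordinal.bsup_lt_ord ?_ (fun i hi => hsucc _ (hegΛ i (hi.trans hνordΛ)))
    rwa [Cardinal.card_ord]
  have hegδ : ∀ i < ν.ord, eg i < δ := by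
    intro i hi
    have := Ordinal.le_bsup (fun i (_ : i < ν.ord) => eg i + 1) i hi
    exact lt_of_lt_of_le (lt_add_one _) this
  have hcof : ∀ β < δ, ∃ i < ν.ord, β ≤ eg i := by
    intro β hβ
    rw [hδdef, Ordinal.lt_bsup] at hβ
    obtain ⟨i, hi, hlt⟩ := hβ
    refine ⟨i, hi, ?_⟩
    rw [Ordinal.add_one_eq_succ, Order.lt_succ_iff] at hlt
    exact hlt
  refine ⟨δ, hδΛ, ⟨eg, ?_, hegδ, hcof⟩, ?_⟩
  · intro i j hij hj
    exact (hP j (hj.trans hνordΛ)).2.2.1 i hij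
  · intro β hβ
    obtain ⟨i, hi, hβi⟩ := hcof β hβ
    have hiΛ : i < Λ := hi.trans hνordΛ
    have hi1 : i + 1 < ν.ord := by
      rw [Ordinal.add_one_eq_succ]; exact hνlim.succ_lt hi
    have hβΛ : β < Λ := lt_of_le_of_lt hβi (hegΛ i hiΛ)
    have h1 : g β < g' (eg i) :=
      lt_of_lt_of_le (hg'ge β) (hg'mono β (eg i) hβi)
    have h2 : g' (eg i) ≤ F₀ (eg i) :=
      le_of_lt (lt_of_le_of_lt le_sup_left (lt_add_one _))
    have h3 : F₀ (eg i) ≤ iter F₀ (i + 1) := by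
      rw [iter_eq F₀ (i + 1)]
      refine hF₀mono _ _ ?_
      have := Ordinal.le_bsup (fun j (_ : j < i + 1) => iter F₀ j + 1) i (lt_add_one i)
      exact le_trans (le_of_lt (lt_add_one (eg i))) this
    have h4 : iter F₀ (i + 1) < δ := hegδ (i + 1) hi1
    exact lt_of_lt_of_le h1 (le_of_lt (lt_of_le_of_lt (h2.trans h3) h4))

end CofBranchAux

open CofBranchAux

/-- Let `κ` be an infinite cardinal and let `T` be a well-pruned tree of height `κ⁺`
(all elements have height `< κ⁺`, every level `α < κ⁺` is nonempty, and `T` is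
well-pruned) such that every level of `T` has cardinality strictly less than `κ`.
Then `T` has a cofinal branch: a chain `B ⊆ T` containing an element of every level
`α < κ⁺`. -/
theorem wellPruned_small_levels_cofinal_branch (κ : Cardinal) (hκ : ℵ₀ ≤ κ)
    {T : Type*} [PartialOrder T] (ht : T → Ordinal)
    (hht : IsHeightFunction T ht)
    (hlt : ∀ x : T, ht x < (Order.succ κ).ord)
    (hlevels_ne : ∀ α < (Order.succ κ).ord, ∃ x : T, ht x = α)
    (hlevels_card : ∀ α : Ordinal, #{x : T // ht x = α} < κ)
    (hpruned : ∀ x : T, ∀ α : Ordinal, ht x < α → α < (Order.succ κ).ord →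
      ∃ y : T, x < y ∧ ht y = α) :
    ∃ B : Set T, IsChain (· ≤ ·) B ∧
      ∀ α < (Order.succ κ).ord, ∃ x ∈ B, ht x = α := by
  classical
  set Λ : Ordinal := (Order.succ κ).ord with hΛdef
  have hreg : (Order.succ κ).IsRegular := Cardinal.isRegular_succ hκ
  have hcof : Λ.cof = Order.succ κ := hreg.cof_eq
  have hΛlim : Order.IsSuccLimit Λ := Cardinal.isSuccLimit_ord (hκ.trans (Order.le_succ κ))
  have hsucc : ∀ a < Λ, a + 1 < Λ := fun a ha => by
    rw [Ordinal.add_one_eq_succ]; exact hΛlim.succ_lt ha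
  have hcardΛ : ∀ i < Λ, Ordinal.card i < Λ.cof := fun i hi => by
    rw [hcof]; exact Cardinal.lt_ord.1 hi
  have hκcof : κ < Λ.cof := by rw [hcof]; exact Order.lt_succ κ
  obtain ⟨x0, hx0⟩ := hlevels_ne 0 hΛlim.pos
  -- Step 0: an unbounded set of levels of uniformly small size
  have hstep0 : ∃ μ₀ : Cardinal, μ₀ < κ ∧ ∀ β < Λ, ∃ δ, β < δ ∧ δ < Λ ∧
      #{x : T // ht x = δ} ≤ μ₀ := by
    by_contra hcon
    push_neg at hcon
    set G : Cardinal → Ordinal := fun μ => if h : μ < κ then (hcon μ h).choose else 0 with hGdef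
    have hG1 : ∀ μ (h : μ < κ), G μ < Λ := fun μ h => by
      simp only [hGdef, dif_pos h]; exact (hcon μ h).choose_spec.1
    have hG2 : ∀ μ (h : μ < κ), ∀ δ, G μ < δ → δ < Λ → μ < #{x : T // ht x = δ} := by
      intro μ h δ h1 h2
      simp only [hGdef, dif_pos h] at h1
      exact (hcon μ h).choose_spec.2 δ h1 h2
    have hb : Ordinal.bsup κ.ord (fun o _ => G o.card) < Λ := by
      refine Ordinal.bsup_lt_ord ?_ (fun o ho => ?_)
      · rw [Cardinal.card_ord]; exact hκcof
      · by_cases h : o.card < κ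
        · exact hG1 _ h
        · simp only [hGdef, dif_neg h]; exact hΛlim.pos
    set b := Ordinal.bsup κ.ord (fun o _ => G o.card) with hbdef
    have hδΛ : b + 1 < Λ := hsucc b hb
    have hcd : #{x : T // ht x = b + 1} < κ := hlevels_card (b + 1)
    have hGle : G (#{x : T // ht x = b + 1}) ≤ b := by
      have h1 : (#{x : T // ht x = b + 1}).ord < κ.ord := Cardinal.ord_lt_ord.2 hcd
      have h2 := Ordinal.le_bsup (fun (o : Ordinal) (_ : o < κ.ord) => G o.card)
        (#{x : T // ht x = b + 1}).ord h1
      rwa [Cardinal.card_ord] at h2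
    exact lt_irrefl _ (hG2 _ hcd (b + 1) (lt_of_le_of_lt hGle (lt_add_one b)) hδΛ)
  obtain ⟨μ₀, hμ₀κ, hA⟩ := hstep0
  set ν : Cardinal := Order.succ μ₀ ⊔ ℵ₀ with hνdef
  have hνinf : ℵ₀ ≤ ν := le_sup_right
  have hνreg : ν.IsRegular := by
    rcases lt_or_ge μ₀ ℵ₀ with h | h
    · have h1 : Order.succ μ₀ ≤ ℵ₀ := Order.succ_le_of_lt h
      rw [hνdef, sup_eq_right.2 h1]
      exact Cardinal.isRegular_aleph0
    · have h1 : ℵ₀ ≤ Order.succ μ₀ := h.trans (Order.le_succ μ₀)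
      rw [hνdef, sup_eq_left.2 h1]
      exact Cardinal.isRegular_succ h
  have hνκ : ν ≤ κ := sup_le (Order.succ_le_of_lt hμ₀κ) hκ
  have hμ₀ν : μ₀ < ν := lt_of_lt_of_le (Order.lt_succ μ₀) le_sup_left
  have hpairsν : ∀ s : Cardinal, s ≤ μ₀ → s * s < ν := by
    intro s hs
    rcases lt_or_ge μ₀ ℵ₀ with h | h
    · exact lt_of_lt_of_le
        (Cardinal.mul_lt_aleph0 (lt_of_le_of_lt hs h) (lt_of_le_of_lt hs h)) le_sup_right
    · calc s * s ≤ μ₀ * μ₀ := mul_le_mul' hs hs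
        _ = μ₀ := Cardinal.mul_eq_self h
        _ < ν := hμ₀ν
  have hνordΛ : ν.ord < Λ := Cardinal.ord_lt_ord.2 (lt_of_le_of_lt hνκ (Order.lt_succ κ))
  have hνlim : Order.IsSuccLimit ν.ord := Cardinal.isSuccLimit_ord hνinf
  have hνΛcof : ν < Λ.cof := by rw [hcof]; exact lt_of_le_of_lt hνκ (Order.lt_succ κ)
  -- Step 1 : enumeration e of small levels
  set FA : Ordinal → Ordinal := fun x => if h : x < Λ then (hA x h).choose else 0 with hFAdef
  have hFA : ∀ x < Λ, x < FA x ∧ FA x < Λ := by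
    intro x hx
    simp only [hFAdef, dif_pos hx]
    exact ⟨(hA x hx).choose_spec.1, (hA x hx).choose_spec.2.1⟩
  have hFAcard : ∀ x < Λ, #{t : T // ht t = FA x} ≤ μ₀ := by
    intro x hx
    simp only [hFAdef, dif_pos hx]
    exact (hA x hx).choose_spec.2.2
  set e : Ordinal → Ordinal := CofBranchAux.iter FA with hedef
  have hP := CofBranchAux.iter_spec hΛlim hcardΛ hFA
  have heΛ : ∀ i < Λ, e i < Λ := fun i hi => (hP i hi).1
  have hie : ∀ i < Λ, i ≤ e i := fun i hi => (hP i hi).2.1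
  have hemono : ∀ i j, i < j → j < Λ → e i < e j := fun i j hij hj => (hP j hj).2.2.1 i hij
  have hemono' : ∀ i j, i ≤ j → j < Λ → e i ≤ e j := by
    intro i j hij hj
    rcases eq_or_lt_of_le hij with rfl | h
    · exact le_rfl
    · exact le_of_lt (hemono i j h hj)
  have hecard : ∀ i < Λ, #{t : T // ht t = e i} ≤ μ₀ := by
    intro i hi
    obtain ⟨x, hxΛ, hx⟩ := (hP i hi).2.2.2
    have hh : e i = FA x := hx
    rw [hh]
    exact hFAcard x hxΛ
  -- Step 2
  have hstep2 : ∀ δ, δ < Λ → Good ν.ord δ → ∃ γ < δ, Pii ht e δ γ := by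
    intro δ hδ hg
    exact exists_pi hνreg hg (hpairsν _ (hecard δ hδ))
  -- Step 3 : uniformization
  have hstep3 : ∃ γ', γ' < Λ ∧ ∀ β < Λ, ∃ δ, β < δ ∧ δ < Λ ∧ Good ν.ord δ ∧ Pii ht e δ γ' := by
    by_contra hcon
    push_neg at hcon
    set g : Ordinal → Ordinal := fun γ'' => if h : γ'' < Λ then (hcon γ'' h).choose else 0
      with hgdef
    have hgΛ : ∀ x < Λ, g x < Λ := by
      intro x hx; simp only [hgdef, dif_pos hx]; exact (hcon x hx).choose_spec.1
    obtain ⟨δ, hδΛ, hgood, hclosed⟩ :=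
      exists_good_closed hΛlim hcardΛ hνordΛ hνΛcof hνlim g hgΛ
    obtain ⟨γδ, hγδ, hPi⟩ := hstep2 δ hδΛ hgood
    have hγδΛ : γδ < Λ := hγδ.trans hδΛ
    have hgγ : g γδ < δ := hclosed γδ hγδ
    simp only [hgdef, dif_pos hγδΛ] at hgγ
    exact (hcon γδ hγδΛ).choose_spec.2 δ hgγ hδΛ hgood hPi
  obtain ⟨γ', hγ'Λ, hS⟩ := hstep3
  have hγ'1Λ : γ' + 1 < Λ := hsucc _ hγ'Λ
  -- canonical points of each stratum
  set yf : Ordinal → T := fun δ => if h : δ < Λ then (hlevels_ne (e δ) (heΛ δ h)).choose else x0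
    with hyfdef
  have hyf : ∀ δ < Λ, ht (yf δ) = e δ := by
    intro δ h; simp only [hyfdef, dif_pos h]; exact (hlevels_ne (e δ) (heΛ δ h)).choose_spec
  -- shadows at stratum γ'+1
  have hsh : ∀ δ, γ' + 1 < δ → δ < Λ → e (γ' + 1) < ht (yf δ) := by
    intro δ h1 h2; rw [hyf δ h2]; exact hemono _ _ h1 h2
  set zf : Ordinal → T := fun δ =>
    if h : γ' + 1 < δ ∧ δ < Λ then (hht.surj_on (yf δ) (e (γ' + 1)) (hsh δ h.1 h.2)).choose
    else x0 with hzfdef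
  have hzf : ∀ δ (h : γ' + 1 < δ ∧ δ < Λ), zf δ < yf δ ∧ ht (zf δ) = e (γ' + 1) := by
    intro δ h
    simp only [hzfdef, dif_pos h]
    exact (hht.surj_on (yf δ) (e (γ' + 1)) (hsh δ h.1 h.2)).choose_spec
  -- pigeonhole on the shadow
  obtain ⟨w0, hw0⟩ := hlevels_ne (e (γ' + 1)) (heΛ _ hγ'1Λ)
  set fsh : Ordinal → {t : T // ht t = e (γ' + 1)} := fun δ =>
    if h : γ' + 1 < δ ∧ δ < Λ then ⟨zf δ, (hzf δ h).2⟩ else ⟨w0, hw0⟩ with hfshdef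
  have hAun : ∀ β < Λ, ∃ δ, β < δ ∧ δ < Λ ∧ (γ' + 1 < δ ∧ Good ν.ord δ ∧ Pii ht e δ γ') := by
    intro β hβ
    obtain ⟨δ, h1, h2, h3, h4⟩ := hS (β ⊔ (γ' + 1)) (max_lt hβ hγ'1Λ)
    exact ⟨δ, lt_of_le_of_lt le_sup_left h1, h2, lt_of_le_of_lt le_sup_right h1, h3, h4⟩
  have hshcard : #{t : T // ht t = e (γ' + 1)} < Λ.cof :=
    lt_of_le_of_lt (hecard _ hγ'1Λ) (hμ₀κ.trans hκcof)
  obtain ⟨z₀, hz₀⟩ := exists_unbounded_fiber hAun fsh hshcard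
  -- the glue lemma
  have hglue : ∀ δ δ', (γ' + 1 < δ ∧ δ < Λ ∧ Pii ht e δ γ' ∧ fsh δ = z₀) →
      (γ' + 1 < δ' ∧ δ' < Λ ∧ fsh δ' = z₀) → δ < δ' →
      ∀ z i₀, i₀ < δ → z < yf δ → ht z < e i₀ → z < yf δ' := by
    intro δ δ' hδh hδ'h hδδ' z i₀ hi₀ hz hzht
    obtain ⟨hδ1, hδ2, hδP, hδf⟩ := hδh
    obtain ⟨hδ'1, hδ'2, hδ'f⟩ := hδ'h
    have hzfδ : zf δ = zf δ' := by
      have h1 : (fsh δ : T) = zf δ := by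
        simp only [hfshdef, dif_pos (And.intro hδ1 hδ2)]
      have h2 : (fsh δ' : T) = zf δ' := by
        simp only [hfshdef, dif_pos (And.intro hδ'1 hδ'2)]
      rw [← h1, ← h2, hδf, hδ'f]
    obtain ⟨hz1, hz2⟩ := hzf δ ⟨hδ1, hδ2⟩
    obtain ⟨hz1', hz2'⟩ := hzf δ' ⟨hδ'1, hδ'2⟩
    have hwlt0 : e δ < ht (yf δ') := by rw [hyf δ' hδ'2]; exact hemono _ _ hδδ' hδ'2
    obtain ⟨w, hwlt, hwht⟩ := hht.surj_on (yf δ') (e δ) hwlt0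
    have hz0w : zf δ' < w := hht.lt_of_ht_lt hz1' hwlt
      (by rw [hz2', hwht]; exact hemono _ _ hδ1 hδ2)
    have hEAw : ∃ i, γ' < i ∧ i < δ ∧ EA ht e w (yf δ) i := by
      refine ⟨γ' + 1, lt_add_one γ', hδ1, zf δ, ?_, hz1, hz2⟩
      rw [hzfδ]; exact hz0w
    have hU : Unbdd ht e δ w (yf δ) := hδP w (yf δ) hwht (hyf δ hδ2) hEAw
    obtain ⟨i, hi₀i, hiδ, u, huw, huy, huht⟩ := hU i₀ hi₀
    have hzu : z < u := hht.lt_of_ht_lt hz huy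
      (by rw [huht]; exact lt_of_lt_of_le hzht (hemono' i₀ i hi₀i (hiδ.trans hδ2)))
    exact lt_trans (lt_trans hzu huw) hwlt
  -- pick for each α a stratum and a predecessor there
  have hpick : ∀ α, α < Λ → ∃ δ, (α + 1) < δ ∧ δ < Λ ∧
      (γ' + 1 < δ ∧ Good ν.ord δ ∧ Pii ht e δ γ') ∧ fsh δ = z₀ :=
    fun α hα => hz₀ (α + 1) (hsucc α hα)
  set df : Ordinal → Ordinal := fun α => if h : α < Λ then (hpick α h).choose else 0 with hdfdef
  have hdf : ∀ α (h : α < Λ), α + 1 < df α ∧ df α < Λ ∧ γ' + 1 < df α ∧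
      Pii ht e (df α) γ' ∧ fsh (df α) = z₀ := by
    intro α h
    have hc := (hpick α h).choose_spec
    simp only [hdfdef, dif_pos h]
    exact ⟨hc.1, hc.2.1, hc.2.2.1.1, hc.2.2.1.2.2, hc.2.2.2⟩
  have hαe : ∀ α (h : α < Λ), α < e (df α) := by
    intro α h
    exact lt_of_lt_of_le (lt_of_lt_of_le (lt_add_one α) (le_of_lt (hdf α h).1))
      (hie _ (hdf α h).2.1)
  have hbex : ∀ α (h : α < Λ), ∃ z, z < yf (df α) ∧ ht z = α := by
    intro α h
    refine hht.surj_on (yf (df α)) α ?_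
    rw [hyf _ (hdf α h).2.1]; exact hαe α h
  set bf : Ordinal → T := fun α => if h : α < Λ then (hbex α h).choose else x0 with hbfdef
  have hbf : ∀ α (h : α < Λ), bf α < yf (df α) ∧ ht (bf α) = α := by
    intro α h; simp only [hbfdef, dif_pos h]; exact (hbex α h).choose_spec
  have hkey : ∀ α (h : α < Λ) δ'', df α < δ'' → δ'' < Λ → γ' + 1 < δ'' → fsh δ'' = z₀ →
      bf α < yf δ'' := by
    intro α h δ'' h1 h2 h3 h4
    obtain ⟨hd1, hd2, hd3, hd4, hd5⟩ := hdf α h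
    refine hglue (df α) δ'' ⟨hd3, hd2, hd4, hd5⟩ ⟨h3, h2, h4⟩ h1 (bf α) (α + 1) hd1
      (hbf α h).1 ?_
    rw [(hbf α h).2]
    exact lt_of_lt_of_le (lt_add_one α) (hie (α + 1) (hsucc α h))
  have hcomp : ∀ a a', a < Λ → a' < Λ → a < a' → bf a < bf a' := by
    intro a a' ha ha' haa'
    obtain ⟨δ'', h1, h2, h3, h4⟩ := hz₀ (df a ⊔ df a') (max_lt (hdf a ha).2.1 (hdf a' ha').2.1)
    have hba : bf a < yf δ'' := hkey a ha δ'' (lt_of_le_of_lt le_sup_left h1) h2 h3.1 h4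
    have hba' : bf a' < yf δ'' := hkey a' ha' δ'' (lt_of_le_of_lt le_sup_right h1) h2 h3.1 h4
    exact hht.lt_of_ht_lt hba hba' (by rw [(hbf a ha).2, (hbf a' ha').2]; exact haa')
  refine ⟨bf '' Set.Iio Λ, ?_, ?_⟩
  · rintro x ⟨α, hα, rfl⟩ x' ⟨α', hα', rfl⟩ hne
    rcases lt_trichotomy α α' with h | h | h
    · exact Or.inl (le_of_lt (hcomp α α' hα hα' h))
    · exact absurd (congrArg bf h) hne
    · exact Or.inr (le_of_lt (hcomp α' α hα' hα h))
  · intro α hα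
    exact ⟨bf α, ⟨α, hα, rfl⟩, (hbf α hα).2⟩
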